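/- Let 0 < x₀ < k, γ' > 0, p > 1, t ≥ t₀. Then the limit as p → 1⁺ of (γ'(p−1)(t−t₀) + (ln(k/x₀))^{1−p})^{1/(1−p)} equals ln(k/x₀) · e^{−γ'(t−t₀)}. Hence the Hyper-Gompertz curve k·exp(−(γ'(p−1)(t−t₀) + (ln(k/x₀))^{1−p})^{1/(1−p)}) converges pointwise to the Gompertz curve k·exp(−ln(k/x₀)·e^{−γ'(t−t₀)}) as p → 1⁺. -/

import Mathlib

open Real Filter

/-- As `p → 1⁺`, the Hyper-Gompertz exponent converges to `ln(k/x₀) e^{-γ'(t-t₀)}`,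
hence the Hyper-Gompertz curve converges pointwise to the Gompertz curve. -/
theorem hyperGompertz_to_Gompertz
    (γ' k x₀ t₀ t : ℝ) (hγ : 0 < γ') (hx₀ : 0 < x₀) (hx₀k : x₀ < k) (ht : t₀ ≤ t) :
    Tendsto
      (fun p : ℝ => (γ' * (p - 1) * (t - t₀) + (Real.log (k / x₀)) ^ (1 - p)) ^ (1 / (1 - p)))
      (nhdsWithin 1 (Set.Ioi 1))
      (nhds (Real.log (k / x₀) * Real.exp (-(γ' * (t - t₀))))) ∧
    Tendsto
      (fun p : ℝ => k * Real.exp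
        (-((γ' * (p - 1) * (t - t₀) + (Real.log (k / x₀)) ^ (1 - p)) ^ (1 / (1 - p)))))
      (nhdsWithin 1 (Set.Ioi 1))
      (nhds (k * Real.exp (-(Real.log (k / x₀) * Real.exp (-(γ' * (t - t₀))))))) := by
  set L := Real.log (k / x₀) with hLdef
  have hL : 0 < L := Real.log_pos (by rw [lt_div_iff₀ hx₀]; linarith)
  set Δ := t - t₀ with hΔdef
  have hΔ : 0 ≤ Δ := by simp only [hΔdef]; linarith
  set A : ℝ → ℝ := fun p => γ' * (p - 1) * Δ + L ^ (1 - p) with hA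
  have hA1 : A 1 = 1 := by simp [hA]
  -- derivative of A at 1
  have h1 : HasDerivAt (fun p : ℝ => γ' * (p - 1) * Δ) (γ' * Δ) 1 := by
    have := (((hasDerivAt_id (1:ℝ)).sub_const 1).const_mul γ').mul_const Δ
    simpa using this
  have h2 : HasDerivAt (fun p : ℝ => L ^ (1 - p)) (-(Real.log L)) 1 := by
    have hb := (Real.hasStrictDerivAt_const_rpow hL ((1:ℝ)-1)).hasDerivAt
    have hi : HasDerivAt (fun p : ℝ => 1 - p) (-1) 1 :=
      ((hasDerivAt_id (1:ℝ)).const_sub 1)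
    have hcomp := hb.comp (1:ℝ) hi
    norm_num [Real.rpow_zero] at hcomp
    exact hcomp
  have hdA : HasDerivAt A (γ' * Δ - Real.log L) 1 := by
    exact (h1.add h2).congr_deriv (by ring)
  have hdh : HasDerivAt (fun p => Real.log (A p)) (γ' * Δ - Real.log L) 1 := by
    have := hdA.log (by rw [hA1]; norm_num)
    simpa [hA1] using this
  have hslope :
      Tendsto (fun p => Real.log (A p) * (1 / (1 - p))) (nhdsWithin 1 (Set.Ioi 1))
        (nhds (Real.log L - γ' * Δ)) := by
    have h := hasDerivAt_iff_tendsto_slope.mp hdh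
    have h' : Tendsto (slope (fun p => Real.log (A p)) 1) (nhdsWithin 1 (Set.Ioi 1))
        (nhds (γ' * Δ - Real.log L)) :=
      h.mono_left (nhdsWithin_mono _ (fun x hx => ne_of_gt hx))
    have hneg := h'.neg
    rw [neg_sub] at hneg
    refine hneg.congr (fun p => ?_)
    rw [slope_def_field]
    simp only [hA1, Real.log_one, sub_zero]
    rw [div_eq_mul_inv, one_div, show (1-p) = -(p-1) by ring, inv_neg]
    ring
  have hexp := (Real.continuous_exp.tendsto _).comp hslope
  have hval : Real.exp (Real.log L - γ' * Δ) = L * Real.exp (-(γ' * Δ)) := by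
    rw [sub_eq_add_neg, Real.exp_add, Real.exp_log hL]
  rw [hval] at hexp
  have hmain :
      Tendsto (fun p : ℝ => (A p) ^ (1 / (1 - p))) (nhdsWithin 1 (Set.Ioi 1))
        (nhds (L * Real.exp (-(γ' * Δ)))) := by
    refine hexp.congr' ?_
    filter_upwards [self_mem_nhdsWithin] with p hp
    have hApos : 0 < A p := by
      have h1 : 0 ≤ γ' * (p - 1) * Δ := by
        apply mul_nonneg (mul_nonneg hγ.le (by linarith [Set.mem_Ioi.mp hp])) hΔ
      have h2 : 0 < L ^ (1 - p) := Real.rpow_pos_of_pos hL _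
      simp only [hA]; linarith
    rw [Real.rpow_def_of_pos hApos]; rfl
  refine ⟨hmain, ?_⟩
  have hc : Continuous (fun x : ℝ => k * Real.exp (-x)) := by continuity
  exact (hc.tendsto _).comp hmain
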